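/- If a Banach space X has the Radon–Nikodým property and the pair (X, 𝕂) has property L_{o,p}, then X is strictly convex. -/

import Mathlib

/-- The pair `(X, Y)` has property `L_{o,p}`: for every `ε > 0` and `x ∈ S_X` there is
`η(ε, x) > 0` such that any norm-one operator `T` with `‖T x‖ > 1 - η` attains its norm at a
point `x₀ ∈ S_X` with `‖x₀ - x‖ < ε`. -/
def HasLop (𝕜 X Y : Type*) [RCLike 𝕜] [NormedAddCommGroup X] [NormedSpace 𝕜 X]
    [NormedAddCommGroup Y] [NormedSpace 𝕜 Y] : Prop :=
  ∀ ε : ℝ, 0 < ε → ∀ x : X, ‖x‖ = 1 →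
    ∃ η : ℝ, 0 < η ∧ ∀ T : X →L[𝕜] Y, ‖T‖ = 1 → 1 - η < ‖T x‖ →
      ∃ x₀ : X, ‖x₀‖ = 1 ∧ ‖T x₀‖ = 1 ∧ ‖x₀ - x‖ < ε

/-- The pair `(X, Y)` has property `L_{p,o}`: for every `ε > 0` and norm-one operator `T` there
is `η(ε, T) > 0` such that whenever `x ∈ S_X` satisfies `‖T x‖ > 1 - η`, there is a norm-one
operator `S` attaining its norm at `x` with `‖S - T‖ < ε`. -/
def HasLpo (𝕜 X Y : Type*) [RCLike 𝕜] [NormedAddCommGroup X] [NormedSpace 𝕜 X]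
    [NormedAddCommGroup Y] [NormedSpace 𝕜 Y] : Prop :=
  ∀ ε : ℝ, 0 < ε → ∀ T : X →L[𝕜] Y, ‖T‖ = 1 →
    ∃ η : ℝ, 0 < η ∧ ∀ x : X, ‖x‖ = 1 → 1 - η < ‖T x‖ →
      ∃ S : X →L[𝕜] Y, ‖S‖ = 1 ∧ ‖S x‖ = 1 ∧ ‖S - T‖ < ε

/-- A norm-one functional `f` strongly exposes the unit ball of `X` at some point `x ∈ S_X`:
`Re (f x) = 1` and every sequence in the unit ball along which `Re ∘ f` tends to `1` converges
to `x`. -/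
def StronglyExposes {𝕜 X : Type*} [RCLike 𝕜] [NormedAddCommGroup X] [NormedSpace 𝕜 X]
    (f : X →L[𝕜] 𝕜) : Prop :=
  ∃ x : X, ‖x‖ = 1 ∧ RCLike.re (f x) = 1 ∧
    ∀ z : ℕ → X, (∀ n, ‖z n‖ ≤ 1) →
      Filter.Tendsto (fun n => RCLike.re (f (z n))) Filter.atTop (nhds 1) →
      Filter.Tendsto z Filter.atTop (nhds x)

section Aux

open RCLike Filter

lemma helper_lop {𝕜 X : Type*} [RCLike 𝕜] [NormedAddCommGroup X] [NormedSpace 𝕜 X]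
    (g : X →L[𝕜] 𝕜) (hg : ‖g‖ = 1) (u : X) (hu : ‖u‖ = 1)
    (hstrong : ∀ z : ℕ → X, (∀ n, ‖z n‖ ≤ 1) →
      Tendsto (fun n => re (g (z n))) atTop (nhds 1) → Tendsto z atTop (nhds u))
    (p x₀ : X) (ε : ℝ) (hε : 0 < ε) (hx₀ : ‖x₀‖ = 1) (hgx₀ : ‖g x₀‖ = 1)
    (hx₀p : ‖x₀ - p‖ < ε) (hrep : 1 - ε < re (g p)) :
    ‖u - p‖ < Real.sqrt (4 * ε) + ε := by
  set lam : 𝕜 := g x₀ with hlam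
  set x₀' : X := (starRingEnd 𝕜 lam) • x₀ with hx₀'
  have hnx₀' : ‖x₀'‖ = 1 := by
    rw [hx₀', norm_smul, RCLike.norm_conj, hgx₀, hx₀, mul_one]
  have hgx₀' : re (g x₀') = 1 := by
    rw [hx₀', map_smul, smul_eq_mul, ← hlam, RCLike.conj_mul]
    simp [hgx₀]
  -- x₀' = u
  have hxu : x₀' = u := by
    have := hstrong (fun _ => x₀') (fun n => le_of_eq hnx₀')
      (by simpa [hgx₀'] using tendsto_const_nhds (α := ℝ) (x := (1:ℝ)) (f := (atTop : Filter ℕ)))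
    exact tendsto_nhds_unique tendsto_const_nhds this
  -- re lam bound
  have hgdiff : ‖g x₀ - g p‖ < ε := by
    calc ‖g x₀ - g p‖ = ‖g (x₀ - p)‖ := by rw [map_sub]
    _ ≤ ‖g‖ * ‖x₀ - p‖ := g.le_opNorm _
    _ < ε := by rw [hg, one_mul]; exact hx₀p
  have hrelam : 1 - 2 * ε < re lam := by
    have h1 : re (g p) - re lam ≤ ‖g x₀ - g p‖ := by
      have := RCLike.re_le_norm (g p - g x₀)
      rw [map_sub] at this
      calc re (g p) - re lam = re (g p - g x₀) := by rw [map_sub]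
      _ ≤ ‖g p - g x₀‖ := RCLike.re_le_norm _
      _ = ‖g x₀ - g p‖ := norm_sub_rev _ _
    linarith
  -- ‖lam - 1‖ bound
  have hsq : ‖lam - (1:𝕜)‖ ^ 2 = 2 - 2 * re lam := by
    have h1 : ‖lam - (1:𝕜)‖ ^ 2 = re (lam - 1) * re (lam - 1) + im (lam - 1) * im (lam - 1) :=
      RCLike.norm_sq_eq_def
    have h2 : ‖lam‖ ^ 2 = re lam * re lam + im lam * im lam := RCLike.norm_sq_eq_def
    rw [hgx₀] at h2
    simp only [map_sub, map_one, RCLike.one_re, RCLike.one_im, sub_zero] at h1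
    nlinarith
  have hlamlt : ‖lam - (1:𝕜)‖ < Real.sqrt (4 * ε) := by
    rw [show (4:ℝ) * ε = (2 - 2 * (1 - 2*ε)) by ring]
    refine (Real.lt_sqrt (norm_nonneg _)).2 ?_
    rw [hsq]; linarith
  have hstep : ‖x₀' - x₀‖ = ‖lam - (1:𝕜)‖ := by
    rw [hx₀']
    calc ‖(starRingEnd 𝕜 lam) • x₀ - x₀‖ = ‖((starRingEnd 𝕜 lam) - 1) • x₀‖ := by
          rw [sub_smul, one_smul]
    _ = ‖(starRingEnd 𝕜 lam) - 1‖ * ‖x₀‖ := norm_smul _ _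
    _ = ‖starRingEnd 𝕜 (lam - 1)‖ := by rw [map_sub, map_one, hx₀, mul_one]
    _ = ‖lam - (1:𝕜)‖ := RCLike.norm_conj _
  calc ‖u - p‖ = ‖x₀' - p‖ := by rw [hxu]
  _ ≤ ‖x₀' - x₀‖ + ‖x₀ - p‖ := by have := norm_add_le (x₀' - x₀) (x₀ - p); simpa using this
  _ < Real.sqrt (4 * ε) + ε := by rw [hstep]; exact add_lt_add hlamlt hx₀p

theorem strictlyConvex_aux (𝕜 X : Type*) [RCLike 𝕜] [NormedAddCommGroup X]
    [NormedSpace 𝕜 X] [CompleteSpace X]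
    (hRNP : ∀ f : X →L[𝕜] 𝕜, ‖f‖ = 1 → ∀ δ : ℝ, 0 < δ →
      ∃ g : X →L[𝕜] 𝕜, ‖g‖ = 1 ∧ (∃ x : X, ‖x‖ = 1 ∧ RCLike.re (g x) = 1 ∧
        ∀ z : ℕ → X, (∀ n, ‖z n‖ ≤ 1) →
          Filter.Tendsto (fun n => RCLike.re (g (z n))) Filter.atTop (nhds 1) →
          Filter.Tendsto z Filter.atTop (nhds x)) ∧ ‖g - f‖ < δ)
    (h : ∀ ε : ℝ, 0 < ε → ∀ x : X, ‖x‖ = 1 →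
      ∃ η : ℝ, 0 < η ∧ ∀ T : X →L[𝕜] 𝕜, ‖T‖ = 1 → 1 - η < ‖T x‖ →
        ∃ x₀ : X, ‖x₀‖ = 1 ∧ ‖T x₀‖ = 1 ∧ ‖x₀ - x‖ < ε) :
    ∀ x y : X, ‖x‖ = 1 → ‖y‖ = 1 → x ≠ y → ‖x + y‖ / 2 < 1 := by
  intro x y hx hy hxy
  by_contra hc
  push_neg at hc
  have hle : ‖x + y‖ ≤ 2 := by
    calc ‖x + y‖ ≤ ‖x‖ + ‖y‖ := norm_add_le _ _
    _ = 2 := by rw [hx, hy]; norm_num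
  have hxy2 : ‖x + y‖ = 2 := le_antisymm hle (by linarith)
  set m : X := (2:𝕜)⁻¹ • (x + y) with hmdef
  have h2k : ‖(2:𝕜)‖ = 2 := by simp
  have hm : ‖m‖ = 1 := by
    rw [hmdef, norm_smul, norm_inv, h2k, hxy2]; norm_num
  have hm0 : m ≠ 0 := by
    intro h0; rw [h0, norm_zero] at hm; norm_num at hm
  set d := ‖x - y‖ with hddef
  have hd : 0 < d := by
    rw [hddef, norm_pos_iff]; exact sub_ne_zero.mpr hxy
  set ε := min (d/8) (d^2/100) with hεdef
  have hε : 0 < ε := lt_min (by positivity) (by positivity)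
  obtain ⟨η₁, hη₁, H₁⟩ := h ε hε x hx
  obtain ⟨η₂, hη₂, H₂⟩ := h ε hε y hy
  set η := min (min η₁ η₂) ε / 2 with hηdef
  have hη : 0 < η := by
    apply div_pos (lt_min (lt_min hη₁ hη₂) hε); norm_num
  have h2η₁ : 2 * η ≤ η₁ := by
    have := (min_le_left (min η₁ η₂) ε).trans (min_le_left η₁ η₂)
    rw [hηdef]; linarith
  have h2η₂ : 2 * η ≤ η₂ := by
    have := (min_le_left (min η₁ η₂) ε).trans (min_le_right η₁ η₂)
    rw [hηdef]; linarith
  have h2ηε : 2 * η ≤ ε := by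
    have := min_le_right (min η₁ η₂) ε
    rw [hηdef]; linarith
  obtain ⟨f, hf1, hfm⟩ := exists_dual_vector 𝕜 m (norm_ne_zero_iff.mpr hm0)
  obtain ⟨g, hg1, ⟨u, hu1, hgu, hstrong⟩, hgf⟩ := hRNP f hf1 η hη
  have hgm : 1 - η < RCLike.re (g m) := by
    have h1 : RCLike.re (f m) = 1 := by rw [hfm, hm]; simp
    have h2 : ‖f m - g m‖ < η := by
      calc ‖f m - g m‖ = ‖(f - g) m‖ := by rw [ContinuousLinearMap.sub_apply]
      _ ≤ ‖f - g‖ * ‖m‖ := (f - g).le_opNorm _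
      _ = ‖g - f‖ := by rw [hm, mul_one, norm_sub_rev]
      _ < η := hgf
    have h3 : RCLike.re (f m) - RCLike.re (g m) ≤ ‖f m - g m‖ := by
      calc RCLike.re (f m) - RCLike.re (g m) = RCLike.re (f m - g m) := by rw [map_sub]
      _ ≤ ‖f m - g m‖ := RCLike.re_le_norm _
    linarith
  have hsplit : RCLike.re (g m) = (RCLike.re (g x) + RCLike.re (g y)) / 2 := by
    have h1 : g m = ((2⁻¹ : ℝ) : 𝕜) * (g x + g y) := by
      rw [hmdef, map_smul, map_add, smul_eq_mul, RCLike.ofReal_inv, RCLike.ofReal_ofNat]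
    rw [h1, RCLike.re_ofReal_mul, map_add]
    ring
  have hgxle : RCLike.re (g y) ≤ 1 := by
    calc RCLike.re (g y) ≤ ‖g y‖ := RCLike.re_le_norm _
    _ ≤ ‖g‖ * ‖y‖ := g.le_opNorm _
    _ = 1 := by rw [hg1, hy, mul_one]
  have hgyle : RCLike.re (g x) ≤ 1 := by
    calc RCLike.re (g x) ≤ ‖g x‖ := RCLike.re_le_norm _
    _ ≤ ‖g‖ * ‖x‖ := g.le_opNorm _
    _ = 1 := by rw [hg1, hx, mul_one]
  have hregx : 1 - 2 * η < RCLike.re (g x) := by rw [hsplit] at hgm; linarith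
  have hregy : 1 - 2 * η < RCLike.re (g y) := by rw [hsplit] at hgm; linarith
  obtain ⟨x₀, hx₀1, hgx₀, hx₀x⟩ := H₁ g hg1
    (lt_of_le_of_lt (by linarith) (lt_of_lt_of_le hregx (RCLike.re_le_norm _)))
  obtain ⟨y₀, hy₀1, hgy₀, hy₀y⟩ := H₂ g hg1
    (lt_of_le_of_lt (by linarith) (lt_of_lt_of_le hregy (RCLike.re_le_norm _)))
  have hux := helper_lop g hg1 u hu1 hstrong x x₀ ε hε hx₀1 hgx₀ hx₀x (by linarith)
  have huy := helper_lop g hg1 u hu1 hstrong y y₀ ε hε hy₀1 hgy₀ hy₀y (by linarith)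
  have hε8 : ε ≤ d / 8 := min_le_left _ _
  have hsqrt : Real.sqrt (4 * ε) ≤ d / 5 := by
    have h4 : 4 * ε ≤ (d / 5) ^ 2 := by
      have := min_le_right (d/8) (d^2/100)
      rw [hεdef]; nlinarith
    calc Real.sqrt (4 * ε) ≤ Real.sqrt ((d/5)^2) := Real.sqrt_le_sqrt h4
    _ = d / 5 := Real.sqrt_sq (by positivity)
  have htri : d ≤ ‖u - x‖ + ‖u - y‖ := by
    have h5 := norm_add_le (x - u) (u - y)
    have h6 : ‖x - u‖ = ‖u - x‖ := norm_sub_rev _ _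
    rw [hddef]
    calc ‖x - y‖ = ‖(x - u) + (u - y)‖ := by rw [sub_add_sub_cancel]
    _ ≤ ‖x - u‖ + ‖u - y‖ := norm_add_le _ _
    _ = ‖u - x‖ + ‖u - y‖ := by rw [h6]
  linarith

end Aux

/-- If `X` is a Banach space with the Radon–Nikodym property (here expressed
through its relevant consequence: the strongly exposing functionals are norm dense in the unit
sphere of the dual) and the pair `(X, 𝕜)` has property `L_{o,p}`, then `X` is strictly convex. -/
theorem strictlyConvex_of_rnp_of_lop (𝕜 X : Type*) [RCLike 𝕜] [NormedAddCommGroup X]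
    [NormedSpace 𝕜 X] [CompleteSpace X]
    (hRNP : ∀ f : X →L[𝕜] 𝕜, ‖f‖ = 1 → ∀ δ : ℝ, 0 < δ →
      ∃ g : X →L[𝕜] 𝕜, ‖g‖ = 1 ∧ StronglyExposes g ∧ ‖g - f‖ < δ)
    (h : HasLop 𝕜 X 𝕜) :
    ∀ x y : X, ‖x‖ = 1 → ‖y‖ = 1 → x ≠ y → ‖x + y‖ / 2 < 1 :=
  strictlyConvex_aux 𝕜 X hRNP h
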